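/- arXiv:1404.5684 — 4 statements merged into one kernel-verified Lean document; each statement's English description precedes it below -/
import Mathlib

section
/- For λ > 0, (A^T A + λI)^{-1} = (A_k^T A_k + λI)^{-1} - V̂_k Ŝ_k V̂_k^T, where Ŝ_k = diag(σ_s^2/(λ^2 + λσ_s^2)) for s = k+1,...,r. -/
open Matrix

lemma key_aux {n k l : ℕ} (Vk : Matrix (Fin n) (Fin k) ℝ) (Vh : Matrix (Fin n) (Fin l) ℝ)
    (hVk : Vkᵀ * Vk = 1) (hVO : Vkᵀ * Vh = 0)
    (a f : Fin k → ℝ) (b g : Fin l → ℝ) (lam : ℝ) (hlam : lam ≠ 0)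
    (ha : ∀ i, a i = a i * f i + lam * f i)
    (hb : ∀ i, b i = b i * g i + lam * g i)
    (hVh : Vhᵀ * Vh = 1) :
    (Vk * diagonal a * Vkᵀ + Vh * diagonal b * Vhᵀ + lam • (1 : Matrix (Fin n) (Fin n) ℝ)) *
      (lam⁻¹ • (1 - Vk * diagonal f * Vkᵀ - Vh * diagonal g * Vhᵀ)) = 1 := by
  have hVO' : Vhᵀ * Vk = 0 := by simpa using congrArg Matrix.transpose hVO
  have kk : ∀ (X : Matrix (Fin k) (Fin n) ℝ), Vkᵀ * (Vk * X) = X := fun X => by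
    rw [← Matrix.mul_assoc, hVk, Matrix.one_mul]
  have hh : ∀ (X : Matrix (Fin l) (Fin n) ℝ), Vhᵀ * (Vh * X) = X := fun X => by
    rw [← Matrix.mul_assoc, hVh, Matrix.one_mul]
  have kh : ∀ (X : Matrix (Fin l) (Fin n) ℝ), Vkᵀ * (Vh * X) = 0 := fun X => by
    rw [← Matrix.mul_assoc, hVO, Matrix.zero_mul]
  have hk : ∀ (X : Matrix (Fin k) (Fin n) ℝ), Vhᵀ * (Vk * X) = 0 := fun X => by
    rw [← Matrix.mul_assoc, hVO', Matrix.zero_mul]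
  have hda : diagonal a = diagonal (fun i => a i * f i) + lam • diagonal f := by
    ext i j
    rcases eq_or_ne i j with rfl | hij
    · simpa [Matrix.diagonal_apply_eq] using ha i
    · simp [Matrix.diagonal_apply_ne _ hij]
  have hdb : diagonal b = diagonal (fun i => b i * g i) + lam • diagonal g := by
    ext i j
    rcases eq_or_ne i j with rfl | hij
    · simpa [Matrix.diagonal_apply_eq] using hb i
    · simp [Matrix.diagonal_apply_ne _ hij]
  rw [Matrix.mul_smul]
  have hmain : (Vk * diagonal a * Vkᵀ + Vh * diagonal b * Vhᵀ + lam • (1 : Matrix (Fin n) (Fin n) ℝ)) *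
      (1 - Vk * diagonal f * Vkᵀ - Vh * diagonal g * Vhᵀ) = lam • 1 := by
    have dd : ∀ (X : Matrix (Fin k) (Fin n) ℝ), diagonal a * (diagonal f * X) = diagonal (fun i => a i * f i) * X := fun X => by
      rw [← Matrix.mul_assoc, diagonal_mul_diagonal]
    have dd' : ∀ (X : Matrix (Fin l) (Fin n) ℝ), diagonal b * (diagonal g * X) = diagonal (fun i => b i * g i) * X := fun X => by
      rw [← Matrix.mul_assoc, diagonal_mul_diagonal]
    simp only [Matrix.mul_sub, Matrix.sub_mul, Matrix.mul_one, Matrix.one_mul, Matrix.add_mul,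
      Matrix.mul_assoc, kk, hh, kh, hk, Matrix.mul_zero, Matrix.zero_mul, dd, dd',
      Matrix.smul_mul, Matrix.mul_smul, Matrix.one_mul]
    rw [hda, hdb]
    simp only [Matrix.add_mul, Matrix.mul_add, Matrix.smul_mul, Matrix.mul_smul]
    abel
  rw [hmain, smul_smul, inv_mul_cancel₀ hlam, one_smul]

/-- For `λ > 0`,
`(Aᵀ A + λ I)⁻¹ = (A_kᵀ A_k + λ I)⁻¹ - V̂_k Ŝ_k V̂_kᵀ`
where `Ŝ_k = diag(σ_s² / (λ² + λ σ_s²))` for the tail singular values. -/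
theorem stmt5 (m n k l : ℕ)
    (Uk : Matrix (Fin m) (Fin k) ℝ) (Vk : Matrix (Fin n) (Fin k) ℝ)
    (Uh : Matrix (Fin m) (Fin l) ℝ) (Vh : Matrix (Fin n) (Fin l) ℝ)
    (σ : Fin k → ℝ) (τ : Fin l → ℝ)
    (hσ : ∀ s, 0 < σ s) (hτ : ∀ s, 0 < τ s)
    (hUk : Ukᵀ * Uk = 1) (hVk : Vkᵀ * Vk = 1)
    (hUh : Uhᵀ * Uh = 1) (hVh : Vhᵀ * Vh = 1)
    (hUO : Ukᵀ * Uh = 0) (hVO : Vkᵀ * Vh = 0)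
    (lam : ℝ) (hlam : 0 < lam)
    (A : Matrix (Fin m) (Fin n) ℝ)
    (hA : A = Uk * Matrix.diagonal σ * Vkᵀ + Uh * Matrix.diagonal τ * Vhᵀ)
    (Ak : Matrix (Fin m) (Fin n) ℝ)
    (hAk : Ak = Uk * Matrix.diagonal σ * Vkᵀ) :
    (Aᵀ * A + lam • (1 : Matrix (Fin n) (Fin n) ℝ))⁻¹ =
      (Akᵀ * Ak + lam • (1 : Matrix (Fin n) (Fin n) ℝ))⁻¹ -
        Vh * Matrix.diagonal (fun s => τ s ^ 2 / (lam ^ 2 + lam * τ s ^ 2)) * Vhᵀ := by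
  have hlam' : lam ≠ 0 := ne_of_gt hlam
  have hUO' : Uhᵀ * Uk = 0 := by simpa using congrArg Matrix.transpose hUO
  -- helper reassociation lemmas for U
  have kkU : ∀ (X : Matrix (Fin k) (Fin n) ℝ), Ukᵀ * (Uk * X) = X := fun X => by
    rw [← Matrix.mul_assoc, hUk, Matrix.one_mul]
  have hhU : ∀ (X : Matrix (Fin l) (Fin n) ℝ), Uhᵀ * (Uh * X) = X := fun X => by
    rw [← Matrix.mul_assoc, hUh, Matrix.one_mul]
  have khU : ∀ (X : Matrix (Fin l) (Fin n) ℝ), Ukᵀ * (Uh * X) = 0 := fun X => by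
    rw [← Matrix.mul_assoc, hUO, Matrix.zero_mul]
  have hkU : ∀ (X : Matrix (Fin k) (Fin n) ℝ), Uhᵀ * (Uk * X) = 0 := fun X => by
    rw [← Matrix.mul_assoc, hUO', Matrix.zero_mul]
  have ddσ : ∀ (X : Matrix (Fin k) (Fin n) ℝ),
      diagonal σ * (diagonal σ * X) = diagonal (fun i => σ i * σ i) * X := fun X => by
    rw [← Matrix.mul_assoc, diagonal_mul_diagonal]
  have ddτ : ∀ (X : Matrix (Fin l) (Fin n) ℝ),
      diagonal τ * (diagonal τ * X) = diagonal (fun i => τ i * τ i) * X := fun X => by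
    rw [← Matrix.mul_assoc, diagonal_mul_diagonal]
  have hATA : Aᵀ * A = Vk * diagonal (fun i => σ i * σ i) * Vkᵀ
      + Vh * diagonal (fun i => τ i * τ i) * Vhᵀ := by
    subst hA
    simp only [transpose_add, transpose_mul, diagonal_transpose, transpose_transpose, Matrix.add_mul,
      Matrix.mul_add, Matrix.mul_assoc, kkU, hhU, khU, hkU, Matrix.mul_zero, Matrix.zero_mul,
      ddσ, ddτ, add_zero, zero_add]
  have hATAk : Akᵀ * Ak = Vk * diagonal (fun i => σ i * σ i) * Vkᵀ := by
    subst hAk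
    simp only [transpose_mul, diagonal_transpose, transpose_transpose, Matrix.mul_assoc, kkU, ddσ]
  set f : Fin k → ℝ := fun i => σ i * σ i / (lam + σ i * σ i) with hf
  set g : Fin l → ℝ := fun i => τ i * τ i / (lam + τ i * τ i) with hg
  have haf : ∀ i, σ i * σ i = σ i * σ i * f i + lam * f i := fun i => by
    have hs := hσ i
    have h1 : lam + σ i * σ i ≠ 0 := by positivity
    simp only [hf]
    field_simp [hf]
    ring
  have hbg : ∀ i, τ i * τ i = τ i * τ i * g i + lam * g i := fun i => by
    have hs := hτ i
    have h1 : lam + τ i * τ i ≠ 0 := by positivity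
    simp only [hg]
    field_simp [hg]
    ring
  have hMinv : (Aᵀ * A + lam • (1 : Matrix (Fin n) (Fin n) ℝ))⁻¹ =
      lam⁻¹ • (1 - Vk * diagonal f * Vkᵀ - Vh * diagonal g * Vhᵀ) := by
    apply Matrix.inv_eq_right_inv
    rw [hATA]
    exact key_aux Vk Vh hVk hVO _ f _ g lam hlam' haf hbg hVh
  have hMkinv : (Akᵀ * Ak + lam • (1 : Matrix (Fin n) (Fin n) ℝ))⁻¹ =
      lam⁻¹ • (1 - Vk * diagonal f * Vkᵀ - Vh * diagonal (fun _ : Fin l => (0:ℝ)) * Vhᵀ) := by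
    apply Matrix.inv_eq_right_inv
    rw [hATAk]
    have h0 : Vh * diagonal (fun _ : Fin l => (0:ℝ)) * Vhᵀ = 0 := by
      have hd0 : diagonal (fun _ : Fin l => (0:ℝ)) = 0 := diagonal_zero
      rw [hd0, Matrix.mul_zero, Matrix.zero_mul]
    calc (Vk * diagonal (fun i => σ i * σ i) * Vkᵀ + lam • 1) *
          (lam⁻¹ • (1 - Vk * diagonal f * Vkᵀ - Vh * diagonal (fun _ : Fin l => (0:ℝ)) * Vhᵀ))
        = (Vk * diagonal (fun i => σ i * σ i) * Vkᵀ + Vh * diagonal (fun _ : Fin l => (0:ℝ)) * Vhᵀ + lam • 1) *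
          (lam⁻¹ • (1 - Vk * diagonal f * Vkᵀ - Vh * diagonal (fun _ : Fin l => (0:ℝ)) * Vhᵀ)) := by
          rw [h0, add_zero]
      _ = 1 := key_aux Vk Vh hVk hVO _ f _ (fun _ => 0) lam hlam'
              haf (fun i => by simp) hVh
  rw [hMinv, hMkinv]
  have h0 : Vh * diagonal (fun _ : Fin l => (0:ℝ)) * Vhᵀ = 0 := by
    have hd0 : diagonal (fun _ : Fin l => (0:ℝ)) = 0 := diagonal_zero
    rw [hd0, Matrix.mul_zero, Matrix.zero_mul]
  rw [h0, sub_zero]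
  have hS : Vh * diagonal (fun s => τ s ^ 2 / (lam ^ 2 + lam * τ s ^ 2)) * Vhᵀ
      = lam⁻¹ • (Vh * diagonal g * Vhᵀ) := by
    have hdg : (fun s => τ s ^ 2 / (lam ^ 2 + lam * τ s ^ 2)) = fun s => lam⁻¹ * g s := by
      funext s
      have hs := hτ s
      have h1 : lam + τ s * τ s ≠ 0 := by positivity
      have h2 : lam ^ 2 + lam * τ s ^ 2 ≠ 0 := by positivity
      simp only [hg]
      field_simp [hg]
    rw [hdg]
    rw [show (fun s => lam⁻¹ * g s) = lam⁻¹ • g from rfl, diagonal_smul,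
      Matrix.mul_smul, Matrix.smul_mul]
  rw [hS, smul_sub, smul_sub]
end

section
/- The truncated Tikhonov solution is the orthogonal projection of the true Tikhonov solution onto the span of the first k right singular vectors: x̃₁ = V_k V_k^T x̄, where x̄ = (A^T A + λI)^{-1} A^T b and x̃₁ = (A_k^T A_k + λI)^{-1} A_k^T b. -/
open Matrix


private lemma combdiag {n p : ℕ} (V : Matrix (Fin n) (Fin p) ℝ) (f g : Fin p → ℝ) (lam : ℝ)
    (h : ∀ s, f s + lam * g s = 1) :
    V * (Matrix.diagonal f * Vᵀ) + lam • (V * (Matrix.diagonal g * Vᵀ)) = V * Vᵀ := by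
  have h1 : Matrix.diagonal f + lam • Matrix.diagonal g = 1 := by
    rw [← Matrix.diagonal_smul, Matrix.diagonal_add]
    have h2 : (fun i => f i + (lam • g) i) = fun _ => (1:ℝ) := by
      funext s; simpa using h s
    rw [h2]; exact Matrix.diagonal_one
  calc V * (Matrix.diagonal f * Vᵀ) + lam • (V * (Matrix.diagonal g * Vᵀ))
      = V * ((Matrix.diagonal f + lam • Matrix.diagonal g) * Vᵀ) := by
        rw [Matrix.add_mul, Matrix.mul_add, Matrix.smul_mul, Matrix.mul_smul]
    _ = V * Vᵀ := by rw [h1, Matrix.one_mul]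

/-- The truncated Tikhonov solution is the orthogonal projection of the true
Tikhonov solution onto the span of the first k right singular vectors:
`x̃₁ = V_k V_kᵀ x̄`. -/
theorem stmt11 (m n k l : ℕ)
    (Uk : Matrix (Fin m) (Fin k) ℝ) (Vk : Matrix (Fin n) (Fin k) ℝ)
    (Uh : Matrix (Fin m) (Fin l) ℝ) (Vh : Matrix (Fin n) (Fin l) ℝ)
    (σ : Fin k → ℝ) (τ : Fin l → ℝ)
    (hσ : ∀ s, 0 < σ s) (hτ : ∀ s, 0 < τ s)
    (hUk : Ukᵀ * Uk = 1) (hVk : Vkᵀ * Vk = 1)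
    (hUh : Uhᵀ * Uh = 1) (hVh : Vhᵀ * Vh = 1)
    (hUO : Ukᵀ * Uh = 0) (hVO : Vkᵀ * Vh = 0)
    (hVcomplete : Vk * Vkᵀ + Vh * Vhᵀ = 1)
    (lam : ℝ) (hlam : 0 < lam)
    (A : Matrix (Fin m) (Fin n) ℝ)
    (hA : A = Uk * Matrix.diagonal σ * Vkᵀ + Uh * Matrix.diagonal τ * Vhᵀ)
    (Ak : Matrix (Fin m) (Fin n) ℝ)
    (hAk : Ak = Uk * Matrix.diagonal σ * Vkᵀ)
    (b : Fin m → ℝ) :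
    ((Akᵀ * Ak + lam • (1 : Matrix (Fin n) (Fin n) ℝ))⁻¹).mulVec (Akᵀ.mulVec b) =
      (Vk * Vkᵀ).mulVec
        (((Aᵀ * A + lam • (1 : Matrix (Fin n) (Fin n) ℝ))⁻¹).mulVec (Aᵀ.mulVec b)) := by
  have hUO' : Uhᵀ * Uk = 0 := by
    have := congrArg transpose hUO; simpa [transpose_mul] using this
  have hVO' : Vhᵀ * Vk = 0 := by
    have := congrArg transpose hVO; simpa [transpose_mul] using this
  have e1 : ∀ (p : ℕ) (X : Matrix (Fin l) (Fin p) ℝ), Ukᵀ * (Uh * X) = 0 := by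
    intro p X; rw [← Matrix.mul_assoc, hUO, Matrix.zero_mul]
  have e2 : ∀ (p : ℕ) (X : Matrix (Fin k) (Fin p) ℝ), Uhᵀ * (Uk * X) = 0 := by
    intro p X; rw [← Matrix.mul_assoc, hUO', Matrix.zero_mul]
  have e3 : ∀ (p : ℕ) (X : Matrix (Fin l) (Fin p) ℝ), Vkᵀ * (Vh * X) = 0 := by
    intro p X; rw [← Matrix.mul_assoc, hVO, Matrix.zero_mul]
  have e4 : ∀ (p : ℕ) (X : Matrix (Fin k) (Fin p) ℝ), Vhᵀ * (Vk * X) = 0 := by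
    intro p X; rw [← Matrix.mul_assoc, hVO', Matrix.zero_mul]
  have e5 : ∀ (p : ℕ) (X : Matrix (Fin k) (Fin p) ℝ), Ukᵀ * (Uk * X) = X := by
    intro p X; rw [← Matrix.mul_assoc, hUk, Matrix.one_mul]
  have e6 : ∀ (p : ℕ) (X : Matrix (Fin l) (Fin p) ℝ), Uhᵀ * (Uh * X) = X := by
    intro p X; rw [← Matrix.mul_assoc, hUh, Matrix.one_mul]
  have e7 : ∀ (p : ℕ) (X : Matrix (Fin k) (Fin p) ℝ), Vkᵀ * (Vk * X) = X := by
    intro p X; rw [← Matrix.mul_assoc, hVk, Matrix.one_mul]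
  have e8 : ∀ (p : ℕ) (X : Matrix (Fin l) (Fin p) ℝ), Vhᵀ * (Vh * X) = X := by
    intro p X; rw [← Matrix.mul_assoc, hVh, Matrix.one_mul]
  have e9 : ∀ (p : ℕ) (d e : Fin k → ℝ) (X : Matrix (Fin k) (Fin p) ℝ),
      Matrix.diagonal d * (Matrix.diagonal e * X) = Matrix.diagonal (fun s => d s * e s) * X := by
    intro p d e X; rw [← Matrix.mul_assoc, Matrix.diagonal_mul_diagonal]
  have e10 : ∀ (p : ℕ) (d e : Fin l → ℝ) (X : Matrix (Fin l) (Fin p) ℝ),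
      Matrix.diagonal d * (Matrix.diagonal e * X) = Matrix.diagonal (fun s => d s * e s) * X := by
    intro p d e X; rw [← Matrix.mul_assoc, Matrix.diagonal_mul_diagonal]
  have hσl : ∀ s, σ s ^ 2 + lam ≠ 0 := fun s => by positivity
  have hτl : ∀ s, τ s ^ 2 + lam ≠ 0 := fun s => by positivity
  set P : Matrix (Fin n) (Fin n) ℝ :=
    Vk * Matrix.diagonal (fun s => (σ s ^ 2 + lam)⁻¹) * Vkᵀ + lam⁻¹ • (Vh * Vhᵀ) with hP
  set Q : Matrix (Fin n) (Fin n) ℝ :=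
    Vk * Matrix.diagonal (fun s => (σ s ^ 2 + lam)⁻¹) * Vkᵀ +
    Vh * Matrix.diagonal (fun s => (τ s ^ 2 + lam)⁻¹) * Vhᵀ with hQ
  have hPinv : (Akᵀ * Ak + lam • (1 : Matrix (Fin n) (Fin n) ℝ))⁻¹ = P := by
    apply Matrix.inv_eq_right_inv
    subst hAk
    rw [hP, ← hVcomplete]
    simp only [transpose_mul, transpose_add, diagonal_transpose, transpose_transpose,
      Matrix.mul_add, Matrix.add_mul, Matrix.smul_mul, Matrix.mul_smul, Matrix.mul_assoc,
      e1, e2, e3, e4, e5, e6, e7, e8, e9, e10, Matrix.mul_zero, Matrix.zero_mul,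
      smul_zero, add_zero, zero_add]
    rw [smul_smul, inv_mul_cancel₀ hlam.ne', one_smul,
      combdiag Vk _ _ lam (fun s => by have := hσl s; field_simp)]
  have hQinv : (Aᵀ * A + lam • (1 : Matrix (Fin n) (Fin n) ℝ))⁻¹ = Q := by
    apply Matrix.inv_eq_right_inv
    subst hA
    rw [hQ, ← hVcomplete]
    simp only [transpose_mul, transpose_add, diagonal_transpose, transpose_transpose,
      Matrix.mul_add, Matrix.add_mul, Matrix.smul_mul, Matrix.mul_smul, Matrix.mul_assoc,
      e1, e2, e3, e4, e5, e6, e7, e8, e9, e10, Matrix.mul_zero, Matrix.zero_mul,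
      smul_zero, add_zero, zero_add]
    rw [combdiag Vk _ _ lam (fun s => by have := hσl s; field_simp),
      combdiag Vh _ _ lam (fun s => by have := hτl s; field_simp)]
  rw [hPinv, hQinv]
  simp only [Matrix.mulVec_mulVec]
  congr 1
  subst hA hAk
  rw [hP, hQ]
  simp only [transpose_mul, transpose_add, diagonal_transpose, transpose_transpose,
    Matrix.mul_add, Matrix.add_mul, Matrix.smul_mul, Matrix.mul_smul, Matrix.mul_assoc,
    e1, e2, e3, e4, e5, e6, e7, e8, e9, e10, Matrix.mul_zero, Matrix.zero_mul,
    smul_zero, add_zero, zero_add]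
end

section
/- The error between x̄ = (A^T A + λI)^{-1} A^T b and x̂₁ = (A_k^T A_k + λI)^{-1} A^T b satisfies ||x̄ - x̂₁||_2 ≤ (σ_{k+1}^3/(λ^2 + λσ_{k+1}^2)) ||b||_2. -/
open Matrix

/-- Euclidean (ℓ2) norm of a finite real vector. -/
noncomputable def vecEnorm {n : ℕ} (v : Fin n → ℝ) : ℝ :=
  Real.sqrt (∑ i, v i ^ 2)

lemma enorm_eq_sqrt_dot {n : ℕ} (v : Fin n → ℝ) : vecEnorm v = Real.sqrt (v ⬝ᵥ v) := by
  simp [vecEnorm, dotProduct, sq]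

lemma dot_self_nonneg' {n : ℕ} (v : Fin n → ℝ) : 0 ≤ v ⬝ᵥ v :=
  Finset.sum_nonneg fun i _ => mul_self_nonneg _

lemma enorm_nonneg' {n : ℕ} (v : Fin n → ℝ) : 0 ≤ vecEnorm v := Real.sqrt_nonneg _

lemma sq_enorm {n : ℕ} (v : Fin n → ℝ) : vecEnorm v ^ 2 = v ⬝ᵥ v := by
  rw [enorm_eq_sqrt_dot, Real.sq_sqrt (dot_self_nonneg' v)]

lemma enorm_mulVec_orth {m n : ℕ} (W : Matrix (Fin m) (Fin n) ℝ) (hW : Wᵀ * W = 1)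
    (v : Fin n → ℝ) : vecEnorm (W.mulVec v) = vecEnorm v := by
  rw [enorm_eq_sqrt_dot, enorm_eq_sqrt_dot]
  congr 1
  rw [Matrix.dotProduct_mulVec, ← Matrix.mulVec_transpose, Matrix.mulVec_mulVec, hW,
    Matrix.one_mulVec]

lemma dot_le_enorm {n : ℕ} (v w : Fin n → ℝ) : v ⬝ᵥ w ≤ vecEnorm v * vecEnorm w := by
  rw [enorm_eq_sqrt_dot, enorm_eq_sqrt_dot, ← Real.sqrt_mul (dot_self_nonneg' v)]
  refine le_trans (le_abs_self _) ?_
  rw [← Real.sqrt_sq_eq_abs]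
  apply Real.sqrt_le_sqrt
  simpa [dotProduct, sq, mul_pow] using
    Finset.sum_mul_sq_le_sq_mul_sq Finset.univ v w

lemma enorm_transpose_mulVec_le {m n : ℕ} (W : Matrix (Fin m) (Fin n) ℝ) (hW : Wᵀ * W = 1)
    (b : Fin m → ℝ) : vecEnorm (Wᵀ.mulVec b) ≤ vecEnorm b := by
  set w := Wᵀ.mulVec b with hw
  have key : vecEnorm w ^ 2 ≤ vecEnorm b * vecEnorm w := by
    have h1 : w ⬝ᵥ w = b ⬝ᵥ (W.mulVec w) := by
      rw [hw, Matrix.mulVec_transpose, Matrix.dotProduct_mulVec]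
    rw [sq_enorm, h1]
    calc b ⬝ᵥ W.mulVec w ≤ vecEnorm b * vecEnorm (W.mulVec w) := dot_le_enorm _ _
      _ = vecEnorm b * vecEnorm w := by rw [enorm_mulVec_orth W hW]
  rcases eq_or_lt_of_le (enorm_nonneg' w) with h | h
  · rw [← h]; exact enorm_nonneg' b
  · nlinarith [key]

lemma enorm_diagonal_mulVec_le {n : ℕ} (d : Fin n → ℝ) (c : ℝ) (hc : 0 ≤ c)
    (hd : ∀ i, |d i| ≤ c) (v : Fin n → ℝ) :
    vecEnorm ((Matrix.diagonal d).mulVec v) ≤ c * vecEnorm v := by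
  unfold vecEnorm
  rw [← Real.sqrt_sq hc, ← Real.sqrt_mul (sq_nonneg c)]
  apply Real.sqrt_le_sqrt
  rw [Finset.mul_sum]
  apply Finset.sum_le_sum
  intro i _
  rw [Matrix.mulVec_diagonal]
  have h1 : d i ^ 2 ≤ c ^ 2 := sq_le_sq' (neg_le_of_abs_le (hd i)) (le_of_abs_le (hd i))
  calc (d i * v i) ^ 2 = d i ^ 2 * v i ^ 2 := by ring
    _ ≤ c ^ 2 * v i ^ 2 := by nlinarith [sq_nonneg (v i)]

lemma twoblock_inv {n k l : ℕ} (V₁ : Matrix (Fin n) (Fin k) ℝ) (V₂ : Matrix (Fin n) (Fin l) ℝ)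
    (h1 : V₁ᵀ * V₁ = 1) (h2 : V₂ᵀ * V₂ = 1) (h12 : V₁ᵀ * V₂ = 0)
    (d₁ : Fin k → ℝ) (d₂ : Fin l → ℝ) (lam : ℝ) (hlam : lam ≠ 0)
    (hd₁ : ∀ i, d₁ i + lam ≠ 0) (hd₂ : ∀ j, d₂ j + lam ≠ 0) :
    (V₁ * diagonal d₁ * V₁ᵀ + V₂ * diagonal d₂ * V₂ᵀ + lam • (1 : Matrix (Fin n) (Fin n) ℝ))⁻¹
    = V₁ * diagonal (fun i => (d₁ i + lam)⁻¹) * V₁ᵀ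
      + V₂ * diagonal (fun j => (d₂ j + lam)⁻¹) * V₂ᵀ
      + lam⁻¹ • (1 - V₁ * V₁ᵀ - V₂ * V₂ᵀ) := by
  have h21 : V₂ᵀ * V₁ = 0 := by
    have h := congrArg Matrix.transpose h12
    simpa [Matrix.transpose_mul] using h
  apply Matrix.inv_eq_right_inv
  have e11 : ∀ {p : ℕ} (X : Matrix (Fin k) (Fin p) ℝ), V₁ᵀ * (V₁ * X) = X := fun X => by
    rw [← Matrix.mul_assoc, h1, Matrix.one_mul]
  have e22 : ∀ {p : ℕ} (X : Matrix (Fin l) (Fin p) ℝ), V₂ᵀ * (V₂ * X) = X := fun X => by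
    rw [← Matrix.mul_assoc, h2, Matrix.one_mul]
  have e12 : ∀ {p : ℕ} (X : Matrix (Fin l) (Fin p) ℝ), V₁ᵀ * (V₂ * X) = 0 := fun X => by
    rw [← Matrix.mul_assoc, h12, Matrix.zero_mul]
  have e21 : ∀ {p : ℕ} (X : Matrix (Fin k) (Fin p) ℝ), V₂ᵀ * (V₁ * X) = 0 := fun X => by
    rw [← Matrix.mul_assoc, h21, Matrix.zero_mul]
  have dd : ∀ {p q : ℕ} (e f : Fin p → ℝ) (X : Matrix (Fin p) (Fin q) ℝ),
      diagonal e * (diagonal f * X) = diagonal (fun i => e i * f i) * X := fun e f X => by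
    rw [← Matrix.mul_assoc, Matrix.diagonal_mul_diagonal]
  have c1 : diagonal (fun i => d₁ i * (d₁ i + lam)⁻¹) + lam • diagonal (fun i => (d₁ i + lam)⁻¹)
      = (1 : Matrix (Fin k) (Fin k) ℝ) := by
    ext i j
    rcases eq_or_ne i j with rfl | hij
    · simp [Matrix.diagonal_apply_eq, Matrix.one_apply_eq]
      field_simp
      exact div_self (hd₁ i)
    · simp [Matrix.diagonal_apply_ne _ hij, Matrix.one_apply_ne hij]
  have c2 : diagonal (fun j => d₂ j * (d₂ j + lam)⁻¹) + lam • diagonal (fun j => (d₂ j + lam)⁻¹)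
      = (1 : Matrix (Fin l) (Fin l) ℝ) := by
    ext i j
    rcases eq_or_ne i j with rfl | hij
    · simp [Matrix.diagonal_apply_eq, Matrix.one_apply_eq]
      field_simp
      exact div_self (hd₂ i)
    · simp [Matrix.diagonal_apply_ne _ hij, Matrix.one_apply_ne hij]
  simp only [Matrix.mul_add, Matrix.add_mul, Matrix.mul_sub, Matrix.sub_mul,
    Matrix.smul_mul, Matrix.mul_smul, Matrix.mul_assoc, Matrix.mul_one, Matrix.one_mul,
    e11, e22, e12, e21, dd, Matrix.mul_zero, Matrix.zero_mul, smul_smul,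
    mul_inv_cancel₀ hlam, one_smul, smul_zero, add_zero, zero_add, sub_zero]
  have f1 : V₁ * ((Matrix.diagonal fun i => d₁ i * (d₁ i + lam)⁻¹) * V₁ᵀ) +
      lam • (V₁ * ((Matrix.diagonal fun i => (d₁ i + lam)⁻¹) * V₁ᵀ)) = V₁ * V₁ᵀ := by
    rw [← Matrix.mul_smul, ← Matrix.mul_add, ← Matrix.smul_mul, ← Matrix.add_mul, c1,
      Matrix.one_mul]
  have f2 : V₂ * ((Matrix.diagonal fun i => d₂ i * (d₂ i + lam)⁻¹) * V₂ᵀ) +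
      lam • (V₂ * ((Matrix.diagonal fun j => (d₂ j + lam)⁻¹) * V₂ᵀ)) = V₂ * V₂ᵀ := by
    rw [← Matrix.mul_smul, ← Matrix.mul_add, ← Matrix.smul_mul, ← Matrix.add_mul, c2,
      Matrix.one_mul]
  have f3 : V₁ * (Matrix.diagonal d₁ * V₁ᵀ) + V₂ * (Matrix.diagonal d₂ * V₂ᵀ) + lam • 1 -
        (V₁ * (Matrix.diagonal d₁ * V₁ᵀ) + lam • (V₁ * V₁ᵀ)) -
        (V₂ * (Matrix.diagonal d₂ * V₂ᵀ) + lam • (V₂ * V₂ᵀ)) =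
      lam • ((1 : Matrix (Fin n) (Fin n) ℝ) - V₁ * V₁ᵀ - V₂ * V₂ᵀ) := by
    rw [smul_sub, smul_sub]; abel
  rw [f3, smul_smul, inv_mul_cancel₀ hlam, one_smul, f1, f2]
  abel

set_option maxHeartbeats 1000000 in
/-- The error between `x̄ = (AᵀA + λI)⁻¹ Aᵀ b` and
`x̂₁ = (A_kᵀA_k + λI)⁻¹ Aᵀ b` satisfies
`‖x̄ - x̂₁‖₂ ≤ (σ_{k+1}³/(λ² + λσ_{k+1}²)) ‖b‖₂`. -/
theorem stmt12 (m n k l : ℕ) (hl : 0 < l)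
    (Uk : Matrix (Fin m) (Fin k) ℝ) (Vk : Matrix (Fin n) (Fin k) ℝ)
    (Uh : Matrix (Fin m) (Fin l) ℝ) (Vh : Matrix (Fin n) (Fin l) ℝ)
    (σ : Fin k → ℝ) (τ : Fin l → ℝ)
    (hσ : ∀ s, 0 < σ s) (hτ : ∀ s, 0 < τ s)
    (hσmono : ∀ i j : Fin k, i ≤ j → σ j ≤ σ i)
    (hτmono : ∀ i j : Fin l, i ≤ j → τ j ≤ τ i)
    (hcross : ∀ (i : Fin k) (j : Fin l), τ j ≤ σ i)
    (hUk : Ukᵀ * Uk = 1) (hVk : Vkᵀ * Vk = 1)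
    (hUh : Uhᵀ * Uh = 1) (hVh : Vhᵀ * Vh = 1)
    (hUO : Ukᵀ * Uh = 0) (hVO : Vkᵀ * Vh = 0)
    (lam : ℝ) (hlam : 0 < lam)
    (A : Matrix (Fin m) (Fin n) ℝ)
    (hA : A = Uk * Matrix.diagonal σ * Vkᵀ + Uh * Matrix.diagonal τ * Vhᵀ)
    (Ak : Matrix (Fin m) (Fin n) ℝ)
    (hAk : Ak = Uk * Matrix.diagonal σ * Vkᵀ)
    (b : Fin m → ℝ) :
    vecEnorm (((Aᵀ * A + lam • (1 : Matrix (Fin n) (Fin n) ℝ))⁻¹).mulVec (Aᵀ.mulVec b) -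
        ((Akᵀ * Ak + lam • (1 : Matrix (Fin n) (Fin n) ℝ))⁻¹).mulVec (Aᵀ.mulVec b)) ≤
      τ ⟨0, hl⟩ ^ 3 / (lam ^ 2 + lam * τ ⟨0, hl⟩ ^ 2) * vecEnorm b := by
  have hUhUk : Uhᵀ * Uk = 0 := by
    have h := congrArg Matrix.transpose hUO
    simpa [Matrix.transpose_mul] using h
  have eU11 : ∀ {p : ℕ} (X : Matrix (Fin k) (Fin p) ℝ), Ukᵀ * (Uk * X) = X := fun X => by
    rw [← Matrix.mul_assoc, hUk, Matrix.one_mul]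
  have eU22 : ∀ {p : ℕ} (X : Matrix (Fin l) (Fin p) ℝ), Uhᵀ * (Uh * X) = X := fun X => by
    rw [← Matrix.mul_assoc, hUh, Matrix.one_mul]
  have eU12 : ∀ {p : ℕ} (X : Matrix (Fin l) (Fin p) ℝ), Ukᵀ * (Uh * X) = 0 := fun X => by
    rw [← Matrix.mul_assoc, hUO, Matrix.zero_mul]
  have eU21 : ∀ {p : ℕ} (X : Matrix (Fin k) (Fin p) ℝ), Uhᵀ * (Uk * X) = 0 := fun X => by
    rw [← Matrix.mul_assoc, hUhUk, Matrix.zero_mul]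
  have dd : ∀ {p q : ℕ} (e f : Fin p → ℝ) (X : Matrix (Fin p) (Fin q) ℝ),
      diagonal e * (diagonal f * X) = diagonal (fun i => e i * f i) * X := fun e f X => by
    rw [← Matrix.mul_assoc, Matrix.diagonal_mul_diagonal]
  -- Gram matrices
  have hAtA : Aᵀ * A = Vk * diagonal (fun i => σ i ^ 2) * Vkᵀ
      + Vh * diagonal (fun j => τ j ^ 2) * Vhᵀ := by
    rw [hA]
    simp only [Matrix.transpose_add, Matrix.transpose_mul, Matrix.transpose_transpose,
      Matrix.diagonal_transpose, Matrix.add_mul, Matrix.mul_add, Matrix.mul_assoc,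
      eU11, eU22, eU12, eU21, dd, Matrix.mul_zero, add_zero, zero_add, sq]
  have hAtAk : Akᵀ * Ak = Vk * diagonal (fun i => σ i ^ 2) * Vkᵀ
      + Vh * diagonal (fun _ : Fin l => (0:ℝ)) * Vhᵀ := by
    rw [hAk]
    simp only [Matrix.transpose_mul, Matrix.transpose_transpose, Matrix.diagonal_transpose,
      Matrix.mul_assoc, eU11, dd, sq, Matrix.diagonal_zero, Matrix.mul_zero, Matrix.zero_mul,
      add_zero]
  have hd₁ : ∀ i : Fin k, σ i ^ 2 + lam ≠ 0 := fun i => by positivity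
  have hd₂ : ∀ j : Fin l, τ j ^ 2 + lam ≠ 0 := fun j => by positivity
  have hd₀ : ∀ _j : Fin l, (0:ℝ) + lam ≠ 0 := fun j => by positivity
  have hinv1 := twoblock_inv Vk Vh hVk hVh hVO (fun i => σ i ^ 2) (fun j => τ j ^ 2)
    lam hlam.ne' hd₁ hd₂
  have hinv2 := twoblock_inv Vk Vh hVk hVh hVO (fun i => σ i ^ 2) (fun _ => (0:ℝ))
    lam hlam.ne' hd₁ hd₀
  have hVhVk : Vhᵀ * Vk = 0 := by
    have h := congrArg Matrix.transpose hVO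
    simpa [Matrix.transpose_mul] using h
  have eV11 : ∀ {p : ℕ} (X : Matrix (Fin k) (Fin p) ℝ), Vkᵀ * (Vk * X) = X := fun X => by
    rw [← Matrix.mul_assoc, hVk, Matrix.one_mul]
  have eV22 : ∀ {p : ℕ} (X : Matrix (Fin l) (Fin p) ℝ), Vhᵀ * (Vh * X) = X := fun X => by
    rw [← Matrix.mul_assoc, hVh, Matrix.one_mul]
  have eV12 : ∀ {p : ℕ} (X : Matrix (Fin l) (Fin p) ℝ), Vkᵀ * (Vh * X) = 0 := fun X => by
    rw [← Matrix.mul_assoc, hVO, Matrix.zero_mul]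
  have eV21 : ∀ {p : ℕ} (X : Matrix (Fin k) (Fin p) ℝ), Vhᵀ * (Vk * X) = 0 := fun X => by
    rw [← Matrix.mul_assoc, hVhVk, Matrix.zero_mul]
  have hkey : (Aᵀ * A + lam • (1 : Matrix (Fin n) (Fin n) ℝ))⁻¹ * Aᵀ
      - (Akᵀ * Ak + lam • (1 : Matrix (Fin n) (Fin n) ℝ))⁻¹ * Aᵀ
      = Vh * (diagonal (fun j => ((τ j ^ 2 + lam)⁻¹ - lam⁻¹) * τ j) * Uhᵀ) := by
    rw [hAtA, hAtAk, hinv1, hinv2, hA]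
    simp only [Matrix.transpose_add, Matrix.transpose_mul, Matrix.transpose_transpose,
      Matrix.diagonal_transpose, Matrix.add_mul, Matrix.sub_mul, Matrix.mul_add,
      Matrix.mul_sub, Matrix.smul_mul, Matrix.mul_smul, Matrix.mul_assoc,
      eV11, eV22, eV12, eV21, dd, Matrix.mul_zero, Matrix.zero_mul, Matrix.one_mul,
      add_zero, zero_add, smul_zero, zero_sub, sub_zero, Matrix.diagonal_zero]
    simp only [sub_self, smul_zero, add_zero]
    rw [add_sub_add_left_eq_sub, ← Matrix.mul_sub, ← Matrix.sub_mul]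
    congr 2
    ext i j
    rcases eq_or_ne i j with rfl | hij
    · simp only [Matrix.sub_apply, Matrix.diagonal_apply_eq]
      ring
    · simp [Matrix.diagonal_apply_ne _ hij]
  have hvec : ((Aᵀ * A + lam • (1 : Matrix (Fin n) (Fin n) ℝ))⁻¹).mulVec (Aᵀ.mulVec b)
      - ((Akᵀ * Ak + lam • (1 : Matrix (Fin n) (Fin n) ℝ))⁻¹).mulVec (Aᵀ.mulVec b)
      = Vh.mulVec ((diagonal (fun j => ((τ j ^ 2 + lam)⁻¹ - lam⁻¹) * τ j)).mulVec
          (Uhᵀ.mulVec b)) := by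
    rw [Matrix.mulVec_mulVec, Matrix.mulVec_mulVec, ← Matrix.sub_mulVec, hkey,
      ← Matrix.mulVec_mulVec, ← Matrix.mulVec_mulVec]
  rw [hvec, enorm_mulVec_orth Vh hVh]
  have hτ0 : 0 < τ ⟨0, hl⟩ := hτ _
  have hc : 0 ≤ τ ⟨0, hl⟩ ^ 3 / (lam ^ 2 + lam * τ ⟨0, hl⟩ ^ 2) := by positivity
  have hdle : ∀ jj : Fin l, |((τ jj ^ 2 + lam)⁻¹ - lam⁻¹) * τ jj|
      ≤ τ ⟨0, hl⟩ ^ 3 / (lam ^ 2 + lam * τ ⟨0, hl⟩ ^ 2) := by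
    intro jj
    have h1 : 0 < τ jj := hτ jj
    have h2 : (0:ℝ) < τ jj ^ 2 + lam := by positivity
    have habs : ((τ jj ^ 2 + lam)⁻¹ - lam⁻¹) * τ jj
        = -(τ jj ^ 3 / (lam * (τ jj ^ 2 + lam))) := by
      field_simp
      ring
    rw [habs, abs_neg, abs_of_nonneg (by positivity)]
    have hle : τ jj ≤ τ ⟨0, hl⟩ := hτmono ⟨0, hl⟩ jj (by simp [Fin.le_def])
    rw [div_le_div_iff₀ (by positivity) (by positivity)]
    have e1 : τ jj ^ 3 ≤ τ ⟨0, hl⟩ ^ 3 := pow_le_pow_left₀ h1.le hle 3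
    have e2 : τ jj ^ 3 * τ ⟨0, hl⟩ ^ 2 ≤ τ ⟨0, hl⟩ ^ 3 * τ jj ^ 2 := by
      nlinarith [mul_le_mul_of_nonneg_left hle
        (mul_nonneg (sq_nonneg (τ jj)) (sq_nonneg (τ ⟨0, hl⟩)))]
    nlinarith [mul_le_mul_of_nonneg_left e1 (sq_nonneg lam),
      mul_le_mul_of_nonneg_left e2 hlam.le]
  calc vecEnorm ((diagonal (fun j => ((τ j ^ 2 + lam)⁻¹ - lam⁻¹) * τ j)).mulVec (Uhᵀ.mulVec b))
      ≤ τ ⟨0, hl⟩ ^ 3 / (lam ^ 2 + lam * τ ⟨0, hl⟩ ^ 2) * vecEnorm (Uhᵀ.mulVec b) :=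
        enorm_diagonal_mulVec_le _ _ hc hdle _
    _ ≤ τ ⟨0, hl⟩ ^ 3 / (lam ^ 2 + lam * τ ⟨0, hl⟩ ^ 2) * vecEnorm b :=
        mul_le_mul_of_nonneg_left (enorm_transpose_mulVec_le Uh hUh b) hc
end

section
/- The relative error of x̂₁ = (A_k^T A_k + λI)^{-1} A^T b with respect to the true Tikhonov solution x̄ = (A^T A + λI)^{-1} A^T b satisfies ||x̄ - x̂₁||_2 / ||x̄||_2 ≤ σ_{k+1}^2 / λ, provided x̄ ≠ 0. -/
open Matrix

/-- Euclidean (ℓ2) norm of a finite real vector. -/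
noncomputable def enorm {n : ℕ} (v : Fin n → ℝ) : ℝ :=
  Real.sqrt (∑ i, v i ^ 2)

lemma enorm_dot {n : ℕ} (v : Fin n → ℝ) : _root_.enorm v = Real.sqrt (v ⬝ᵥ v) := by
  simp [_root_.enorm, dotProduct, sq]

lemma enorm_pos_fin {n : ℕ} {v : Fin n → ℝ} (h : v ≠ 0) : 0 < _root_.enorm v := by
  rcases Function.ne_iff.mp h with ⟨i, hi⟩
  refine Real.sqrt_pos.mpr <| Finset.sum_pos' (fun j _ => sq_nonneg _)
    ⟨i, Finset.mem_univ i, lt_of_le_of_ne (sq_nonneg _) (Ne.symm (pow_ne_zero 2 hi))⟩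

lemma enorm_neg' {n : ℕ} (v : Fin n → ℝ) : _root_.enorm (-v) = _root_.enorm v := by
  simp [_root_.enorm]

lemma enorm_smul' {n : ℕ} (c : ℝ) (v : Fin n → ℝ) : _root_.enorm (c • v) = |c| * _root_.enorm v := by
  simp only [_root_.enorm, Pi.smul_apply, smul_eq_mul, mul_pow]
  rw [← Finset.mul_sum, Real.sqrt_mul (sq_nonneg c), Real.sqrt_sq_eq_abs]

lemma enorm_mulVec_orth_s13 {n l : ℕ} (V : Matrix (Fin n) (Fin l) ℝ) (hV : Vᵀ * V = 1)
    (y : Fin l → ℝ) : _root_.enorm (V.mulVec y) = _root_.enorm y := by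
  rw [enorm_dot, enorm_dot]
  congr 1
  rw [Matrix.dotProduct_mulVec, ← Matrix.mulVec_transpose, Matrix.mulVec_mulVec, hV,
    Matrix.one_mulVec]

lemma enorm_proj_le {n l : ℕ} (V : Matrix (Fin n) (Fin l) ℝ) (hV : Vᵀ * V = 1)
    (x : Fin n → ℝ) : _root_.enorm (Vᵀ.mulVec x) ≤ _root_.enorm x := by
  set w : Fin l → ℝ := Vᵀ.mulVec x with hw
  set z : Fin n → ℝ := x - V.mulVec w with hz
  have h3 : (V.mulVec w) ⬝ᵥ (V.mulVec w) = w ⬝ᵥ w := by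
    rw [Matrix.dotProduct_mulVec, ← Matrix.mulVec_transpose, Matrix.mulVec_mulVec, hV,
      Matrix.one_mulVec]
  have h1 : x ⬝ᵥ (V.mulVec w) = w ⬝ᵥ w := by
    rw [Matrix.dotProduct_mulVec, ← Matrix.mulVec_transpose, ← hw]
  have h2 : (V.mulVec w) ⬝ᵥ x = w ⬝ᵥ w := by
    rw [dotProduct_comm, h1]
  have key : x ⬝ᵥ x - w ⬝ᵥ w = z ⬝ᵥ z := by
    rw [hz]
    simp only [sub_dotProduct, dotProduct_sub]
    rw [h1, h2, h3]; ring
  have hle : w ⬝ᵥ w ≤ x ⬝ᵥ x := by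
    have := dot_self_nonneg' z
    linarith [key]
  rw [enorm_dot, enorm_dot]
  exact Real.sqrt_le_sqrt hle

lemma enorm_diag_mulVec_le {l : ℕ} {t : Fin l → ℝ} {C : ℝ} (hC : 0 ≤ C)
    (h0 : ∀ s, 0 ≤ t s) (h2 : ∀ s, t s ≤ C) (w : Fin l → ℝ) :
    _root_.enorm ((diagonal t).mulVec w) ≤ C * _root_.enorm w := by
  have hD : (diagonal t).mulVec w = fun s => t s * w s := by
    funext s; simp [Matrix.mulVec_diagonal]
  rw [hD, _root_.enorm, _root_.enorm]
  rw [← Real.sqrt_sq hC, ← Real.sqrt_mul (sq_nonneg C)]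
  apply Real.sqrt_le_sqrt
  rw [Finset.mul_sum]
  apply Finset.sum_le_sum
  intro s _
  have ha := h0 s; have hb := h2 s
  have h4 : t s * t s ≤ C * C := mul_le_mul hb hb ha hC
  nlinarith [sq_nonneg (w s), h4]

set_option maxHeartbeats 1000000 in
/-- The relative error of `x̂₁ = (A_kᵀA_k + λI)⁻¹ Aᵀ b` with respect to the true
Tikhonov solution `x̄ = (AᵀA + λI)⁻¹ Aᵀ b` satisfies
`‖x̄ - x̂₁‖₂ / ‖x̄‖₂ ≤ σ_{k+1}² / λ`, provided `x̄ ≠ 0`. -/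
theorem stmt13 (m n k l : ℕ) (hl : 0 < l)
    (Uk : Matrix (Fin m) (Fin k) ℝ) (Vk : Matrix (Fin n) (Fin k) ℝ)
    (Uh : Matrix (Fin m) (Fin l) ℝ) (Vh : Matrix (Fin n) (Fin l) ℝ)
    (σ : Fin k → ℝ) (τ : Fin l → ℝ)
    (hσ : ∀ s, 0 < σ s) (hτ : ∀ s, 0 < τ s)
    (hσmono : ∀ i j : Fin k, i ≤ j → σ j ≤ σ i)
    (hτmono : ∀ i j : Fin l, i ≤ j → τ j ≤ τ i)
    (hcross : ∀ (i : Fin k) (j : Fin l), τ j ≤ σ i)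
    (hUk : Ukᵀ * Uk = 1) (hVk : Vkᵀ * Vk = 1)
    (hUh : Uhᵀ * Uh = 1) (hVh : Vhᵀ * Vh = 1)
    (hUO : Ukᵀ * Uh = 0) (hVO : Vkᵀ * Vh = 0)
    (lam : ℝ) (hlam : 0 < lam)
    (A : Matrix (Fin m) (Fin n) ℝ)
    (hA : A = Uk * Matrix.diagonal σ * Vkᵀ + Uh * Matrix.diagonal τ * Vhᵀ)
    (Ak : Matrix (Fin m) (Fin n) ℝ)
    (hAk : Ak = Uk * Matrix.diagonal σ * Vkᵀ)
    (b : Fin m → ℝ)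
    (xbar : Fin n → ℝ)
    (hxbar : xbar =
      ((Aᵀ * A + lam • (1 : Matrix (Fin n) (Fin n) ℝ))⁻¹).mulVec (Aᵀ.mulVec b))
    (hx0 : xbar ≠ 0) :
    _root_.enorm (xbar -
        ((Akᵀ * Ak + lam • (1 : Matrix (Fin n) (Fin n) ℝ))⁻¹).mulVec (Aᵀ.mulVec b)) /
      _root_.enorm xbar ≤ τ ⟨0, hl⟩ ^ 2 / lam := by
  classical
  have hUOt : Uhᵀ * Uk = 0 := by
    have := congrArg Matrix.transpose hUO
    simpa [Matrix.transpose_mul] using this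
  have hVOt : Vhᵀ * Vk = 0 := by
    have := congrArg Matrix.transpose hVO
    simpa [Matrix.transpose_mul] using this
  have hUkX : ∀ {p : Type} (X : Matrix (Fin k) p ℝ), Ukᵀ * (Uk * X) = X := by
    intro p X; rw [← Matrix.mul_assoc, hUk, Matrix.one_mul]
  have hUhX : ∀ {p : Type} (X : Matrix (Fin l) p ℝ), Uhᵀ * (Uh * X) = X := by
    intro p X; rw [← Matrix.mul_assoc, hUh, Matrix.one_mul]
  have hVkX : ∀ {p : Type} (X : Matrix (Fin k) p ℝ), Vkᵀ * (Vk * X) = X := by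
    intro p X; rw [← Matrix.mul_assoc, hVk, Matrix.one_mul]
  have hUkUhX : ∀ {p : Type} (X : Matrix (Fin l) p ℝ), Ukᵀ * (Uh * X) = 0 := by
    intro p X; rw [← Matrix.mul_assoc, hUO, Matrix.zero_mul]
  have hUhUkX : ∀ {p : Type} (X : Matrix (Fin k) p ℝ), Uhᵀ * (Uk * X) = 0 := by
    intro p X; rw [← Matrix.mul_assoc, hUOt, Matrix.zero_mul]
  have hVkVhX : ∀ {p : Type} (X : Matrix (Fin l) p ℝ), Vkᵀ * (Vh * X) = 0 := by
    intro p X; rw [← Matrix.mul_assoc, hVO, Matrix.zero_mul]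
  set D2 : Matrix (Fin k) (Fin k) ℝ := diagonal (fun s => σ s * σ s) with hD2def
  set T2 : Matrix (Fin l) (Fin l) ℝ := diagonal (fun s => τ s * τ s) with hT2def
  set E : Matrix (Fin k) (Fin k) ℝ := diagonal (fun s => (σ s * σ s + lam)⁻¹) with hEdef
  set N : Matrix (Fin n) (Fin n) ℝ := Vk * E * Vkᵀ + lam⁻¹ • (1 - Vk * Vkᵀ) with hNdef
  -- step 1 : AkᵀAk
  have hAkAk : Akᵀ * Ak = Vk * D2 * Vkᵀ := by
    rw [hAk]
    simp only [Matrix.transpose_mul, Matrix.transpose_transpose, Matrix.diagonal_transpose,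
      Matrix.mul_assoc, hUkX]
    rw [← Matrix.mul_assoc (diagonal σ), diagonal_mul_diagonal, hD2def]
  -- step 2 : AᵀA
  have hAA : Aᵀ * A = Vk * D2 * Vkᵀ + Vh * T2 * Vhᵀ := by
    rw [hA]
    simp only [Matrix.transpose_add, Matrix.transpose_mul, Matrix.transpose_transpose,
      Matrix.diagonal_transpose, Matrix.add_mul, Matrix.mul_add, Matrix.mul_assoc,
      hUkX, hUhX, hUkUhX, hUhUkX, Matrix.mul_zero, Matrix.zero_mul, add_zero, zero_add]
    rw [← Matrix.mul_assoc (diagonal σ), diagonal_mul_diagonal,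
      ← Matrix.mul_assoc (diagonal τ), diagonal_mul_diagonal, hD2def, hT2def]
  -- step 3 : right inverse of Mk
  have key : (Vk * D2 * Vkᵀ + lam • 1) * N = 1 := by
    rw [hNdef, hD2def, hEdef]
    have hdiag : (diagonal fun s => σ s * σ s) * (diagonal fun s => (σ s * σ s + lam)⁻¹)
        + lam • (diagonal fun s => (σ s * σ s + lam)⁻¹) = 1 := by
      rw [diagonal_mul_diagonal, ← Matrix.diagonal_smul, Matrix.diagonal_add,
        ← Matrix.diagonal_one, Matrix.diagonal_eq_diagonal_iff]
      intro i
      have h : σ i * σ i + lam ≠ 0 := by nlinarith [mul_self_nonneg (σ i)]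
      simp only [Pi.smul_apply, smul_eq_mul]
      field_simp
    simp only [Matrix.mul_add, Matrix.add_mul, Matrix.mul_sub, Matrix.sub_mul,
      Matrix.mul_smul, Matrix.smul_mul, Matrix.mul_one, Matrix.one_mul, smul_smul,
      Matrix.mul_assoc, hVkX]
    rw [add_sub_add_left_eq_sub, ← smul_sub, smul_smul, inv_mul_cancel₀ (ne_of_gt hlam),
      one_smul, ← Matrix.mul_assoc (diagonal _) (diagonal _) Vkᵀ, ← Matrix.mul_smul,
      ← Matrix.smul_mul, ← Matrix.mul_add, ← Matrix.add_mul, hdiag, Matrix.one_mul]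
    abel
  have key' : N * (Vk * D2 * Vkᵀ + lam • 1) = 1 := mul_eq_one_comm.mp key
  have hinv : (Akᵀ * Ak + lam • (1 : Matrix (Fin n) (Fin n) ℝ))⁻¹ = N := by
    rw [hAkAk]; exact Matrix.inv_eq_right_inv key
  -- step 4 : M invertible via hx0
  have hMdet : IsUnit (Aᵀ * A + lam • (1 : Matrix (Fin n) (Fin n) ℝ)).det := by
    by_contra hdet
    apply hx0
    rw [hxbar, Matrix.nonsing_inv_apply_not_isUnit _ hdet, Matrix.zero_mulVec]
  have hMx : (Aᵀ * A + lam • (1 : Matrix (Fin n) (Fin n) ℝ)).mulVec xbar = Aᵀ.mulVec b := by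
    rw [hxbar, Matrix.mulVec_mulVec, Matrix.mul_nonsing_inv _ hMdet, Matrix.one_mulVec]
  -- step 5 : N * M
  have hNM : N * (Aᵀ * A + lam • (1 : Matrix (Fin n) (Fin n) ℝ)) =
      1 + lam⁻¹ • (Vh * T2 * Vhᵀ) := by
    rw [hAA]
    have hre : Vk * D2 * Vkᵀ + Vh * T2 * Vhᵀ + lam • (1 : Matrix (Fin n) (Fin n) ℝ)
        = (Vk * D2 * Vkᵀ + lam • 1) + Vh * T2 * Vhᵀ := by abel
    rw [hre, Matrix.mul_add, key']
    congr 1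
    rw [hNdef]
    simp only [Matrix.add_mul, Matrix.smul_mul, Matrix.sub_mul, Matrix.one_mul,
      Matrix.mul_assoc, hVkVhX, Matrix.mul_zero, zero_add, sub_zero]
  -- step 6 : difference formula
  have hxh : N.mulVec (Aᵀ.mulVec b) = xbar + lam⁻¹ • (Vh * T2 * Vhᵀ).mulVec xbar := by
    rw [← hMx, Matrix.mulVec_mulVec, hNM, Matrix.add_mulVec, Matrix.one_mulVec,
      Matrix.smul_mulVec]
  have hdiff : xbar - N.mulVec (Aᵀ.mulVec b) = -(lam⁻¹ • (Vh * T2 * Vhᵀ).mulVec xbar) := by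
    rw [hxh]; abel
  -- step 7 : norms
  set w : Fin l → ℝ := Vhᵀ.mulVec xbar with hwdef
  have hvec : (Vh * T2 * Vhᵀ).mulVec xbar = Vh.mulVec (T2.mulVec w) := by
    rw [← Matrix.mulVec_mulVec, ← Matrix.mulVec_mulVec]
  set τ0 : ℝ := τ ⟨0, hl⟩ with hτ0def
  have hτ0 : 0 < τ0 := hτ _
  have hbound : _root_.enorm (T2.mulVec w) ≤ τ0 ^ 2 * _root_.enorm w := by
    have hmain := enorm_diag_mulVec_le (t := fun s => τ s * τ s) (C := τ0 * τ0)
      (mul_nonneg hτ0.le hτ0.le)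
      (fun s => (mul_pos (hτ s) (hτ s)).le)
      (fun s => by
        have h1 : τ s ≤ τ0 := hτmono _ s (by simp [Fin.le_def])
        have h2 : 0 < τ s := hτ s
        show τ s * τ s ≤ τ0 * τ0
        nlinarith) w
    rw [hT2def, sq]
    exact hmain
  have hwle : _root_.enorm w ≤ _root_.enorm xbar := enorm_proj_le Vh hVh xbar
  have hnorm : _root_.enorm (xbar - N.mulVec (Aᵀ.mulVec b)) ≤ (τ0 ^ 2 / lam) * _root_.enorm xbar := by
    rw [hdiff, enorm_neg', enorm_smul', hvec, enorm_mulVec_orth_s13 Vh hVh,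
      abs_of_pos (inv_pos.mpr hlam)]
    calc lam⁻¹ * _root_.enorm (T2.mulVec w) ≤ lam⁻¹ * (τ0 ^ 2 * _root_.enorm w) := by
          apply mul_le_mul_of_nonneg_left hbound (le_of_lt (inv_pos.mpr hlam))
      _ ≤ lam⁻¹ * (τ0 ^ 2 * _root_.enorm xbar) := by
          apply mul_le_mul_of_nonneg_left _ (le_of_lt (inv_pos.mpr hlam))
          exact mul_le_mul_of_nonneg_left hwle (by positivity)
      _ = (τ0 ^ 2 / lam) * _root_.enorm xbar := by ring
  rw [hinv, div_le_iff₀ (enorm_pos_fin hx0)]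
  exact hnorm
end
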